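/- arXiv:1112.6020 — 4 statements merged into one kernel-verified Lean document; each statement's English description precedes it below -/
import Mathlib

section
/- Let Θ be a finite group and X a finitely generated ℤ-free Θ-module (a Θ-lattice). Then the group cohomology H^1(Θ, X^∨), where X^∨ = Hom_ℤ(X, ℤ) with the contragredient Θ-action, is isomorphic to the Pontryagin dual Hom(Ĥ^{-1}(Θ, X), ℚ/ℤ) of the Tate cohomology group Ĥ^{-1}(Θ, X). -/
/-!
STATEMENT 4: for a finite group Θ and a Θ-lattice X (finitely generated ℤ-free),
H¹(Θ, X^∨) ≅ Hom(Ĥ^{-1}(Θ, X), ℚ/ℤ), where X^∨ = Hom_ℤ(X, ℤ) with the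
contragredient action (θ·f)(x) = f(θ⁻¹·x), and ℚ/ℤ is AddCircle (1 : ℚ).
-/

open scoped BigOperators

variable {Θ : Type*} [Group Θ]

/-- The contragredient action of Θ on X^∨ = Hom_ℤ(X, ℤ): (θ·f)(x) = f(θ⁻¹·x). -/
instance contragredient (X : Type*) [AddCommGroup X] [DistribMulAction Θ X] :
    DistribMulAction Θ (X →+ ℤ) where
  smul θ f := f.comp (DistribMulAction.toAddMonoidHom X θ⁻¹)
  one_smul f := by
    ext x
    show f ((1 : Θ)⁻¹ • x) = f x
    simp
  mul_smul a b f := by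
    ext x
    show f ((a * b)⁻¹ • x) = f (b⁻¹ • a⁻¹ • x)
    rw [mul_inv_rev, mul_smul]
  smul_zero θ := rfl
  smul_add θ f g := rfl

/-- The group of 1-cocycles of Θ with values in a Θ-module D. -/
def oneCocycles (Θ : Type*) [Group Θ] (D : Type*) [AddCommGroup D]
    [DistribMulAction Θ D] : AddSubgroup (Θ → D) where
  carrier := {f | ∀ a b : Θ, f (a * b) = f a + a • f b}
  zero_mem' := by intro a b; simp
  add_mem' := by
    intro f g hf hg a b
    simp only [Pi.add_apply, hf a b, hg a b, smul_add]
    abel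
  neg_mem' := by
    intro f hf a b
    simp only [Pi.neg_apply, hf a b, smul_neg]
    abel

/-- The coboundary homomorphism D → (Θ → D), c ↦ (a ↦ a•c − c). -/
def coboundaryHom (Θ : Type*) [Group Θ] (D : Type*) [AddCommGroup D]
    [DistribMulAction Θ D] : D →+ (Θ → D) where
  toFun c := fun a => a • c - c
  map_zero' := by ext a; simp
  map_add' c d := by
    ext a
    simp only [smul_add, Pi.add_apply]
    abel

/-- H¹(Θ, D) = cocycles / coboundaries. -/
def H1 (Θ : Type*) [Group Θ] (D : Type*) [AddCommGroup D] [DistribMulAction Θ D] : Type _ :=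
  oneCocycles Θ D ⧸ ((coboundaryHom Θ D).range.addSubgroupOf (oneCocycles Θ D))

noncomputable instance (Θ : Type*) [Group Θ] (D : Type*) [AddCommGroup D]
    [DistribMulAction Θ D] : AddCommGroup (H1 Θ D) :=
  inferInstanceAs (AddCommGroup
    (oneCocycles Θ D ⧸ ((coboundaryHom Θ D).range.addSubgroupOf (oneCocycles Θ D))))

/-- The norm map x ↦ ∑_{θ∈Θ} θ•x as an additive homomorphism. -/
def normMap (Θ : Type*) [Group Θ] [Fintype Θ] (X : Type*) [AddCommGroup X]
    [DistribMulAction Θ X] : X →+ X where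
  toFun x := ∑ θ : Θ, θ • x
  map_zero' := by simp
  map_add' x y := by simp [smul_add, Finset.sum_add_distrib]

/-- The augmentation subgroup I_Θ X, generated by the elements θ•y − y. -/
def augmentationSubgroup (Θ : Type*) [Group Θ] (X : Type*) [AddCommGroup X]
    [DistribMulAction Θ X] : AddSubgroup X :=
  AddSubgroup.closure {z : X | ∃ (θ : Θ) (y : X), z = θ • y - y}

/-- Ĥ^{-1}(Θ, X) = ker(N_Θ) / I_Θ X. -/
def TateHminusOne (Θ : Type*) [Group Θ] [Fintype Θ] (X : Type*) [AddCommGroup X]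
    [DistribMulAction Θ X] : Type _ :=
  (normMap Θ X).ker ⧸ ((augmentationSubgroup Θ X).addSubgroupOf (normMap Θ X).ker)

noncomputable instance (Θ : Type*) [Group Θ] [Fintype Θ] (X : Type*) [AddCommGroup X]
    [DistribMulAction Θ X] : AddCommGroup (TateHminusOne Θ X) :=
  inferInstanceAs (AddCommGroup
    ((normMap Θ X).ker ⧸ ((augmentationSubgroup Θ X).addSubgroupOf (normMap Θ X).ker)))

set_option linter.unusedSectionVars false
section Aux

variable (Θ : Type) [Group Θ] [Fintype Θ] (X : Type) [AddCommGroup X] [DistribMulAction Θ X]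

lemma contrag_smul_apply (a : Θ) (F : X →+ ℤ) (x : X) : (a • F) x = F (a⁻¹ • x) := rfl

lemma normMap_apply (x : X) : normMap Θ X x = ∑ θ : Θ, θ • x := rfl

lemma norm_smul_eq (g : Θ) (x : X) : normMap Θ X (g • x) = normMap Θ X x := by
  show ∑ θ : Θ, θ • g • x = ∑ θ : Θ, θ • x
  rw [Fintype.sum_equiv (Equiv.mulRight g) _ (fun θ => θ • x) (fun θ => by simp [mul_smul])]

lemma sum_inv_smul (x : X) : ∑ θ : Θ, θ⁻¹ • x = ∑ θ : Θ, θ • x := by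
  exact Fintype.sum_equiv (Equiv.inv Θ) _ _ (fun θ => rfl)

/-- The sum `F_f = ∑ f θ` of a function `f : Θ → X^∨`. -/
def Ff (f : Θ → (X →+ ℤ)) : X →+ ℤ := ∑ θ : Θ, f θ

lemma Ff_apply (f : Θ → (X →+ ℤ)) (x : X) : Ff Θ X f x = ∑ θ : Θ, f θ x := by
  simp [Ff]

variable {Θ X}

/-- key identity: n • f a = F_f - a • F_f for a cocycle f. -/
lemma cocycle_key {f : Θ → (X →+ ℤ)} (hf : f ∈ oneCocycles Θ (X →+ ℤ)) (a : Θ) (x : X) :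
    (Fintype.card Θ : ℤ) * f a x = Ff Θ X f x - Ff Θ X f (a⁻¹ • x) := by
  have h1 : ∑ θ : Θ, f (a * θ) x = Ff Θ X f x := by
    rw [Ff_apply]
    exact Fintype.sum_equiv (Equiv.mulLeft a) _ _ (fun θ => rfl)
  have h2 : ∀ θ : Θ, f (a * θ) x = f a x + f θ (a⁻¹ • x) := fun θ => by
    rw [hf a θ]; rfl
  simp only [h2, Finset.sum_add_distrib, Finset.sum_const, Finset.card_univ, nsmul_eq_mul] at h1
  simp only [Ff_apply] at h1 ⊢
  linarith [h1]

end Aux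
section Aux2
set_option linter.unusedSectionVars false

/-- the map `m ↦ m/n mod ℤ` from `ℤ` to `ℚ/ℤ`. -/
noncomputable def qmap (n : ℕ) : ℤ →+ AddCircle (1 : ℚ) :=
  AddMonoidHom.mk' (fun m => (((m : ℚ) / (n : ℚ) : ℚ) : AddCircle (1 : ℚ)))
    (by
      intro a b
      push_cast
      rw [add_div]
      exact AddCircle.coe_add (p := (1 : ℚ)) _ _)

lemma qmap_apply (n : ℕ) (m : ℤ) : qmap n m = (((m : ℚ) / (n : ℚ) : ℚ) : AddCircle (1 : ℚ)) := rfl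

lemma int_coe_addCircle (q : ℤ) : (((q : ℚ) : ℚ) : AddCircle (1 : ℚ)) = 0 := by
  rw [AddCircle.coe_eq_zero_iff]
  exact ⟨q, by simp⟩

lemma qmap_eq_zero_iff (n : ℕ) (hn : n ≠ 0) (m : ℤ) : qmap n m = 0 ↔ (n : ℤ) ∣ m := by
  rw [qmap_apply, AddCircle.coe_eq_zero_iff]
  constructor
  · rintro ⟨q, hq⟩
    simp only [zsmul_eq_mul, mul_one] at hq
    refine ⟨q, ?_⟩
    have hn' : (n : ℚ) ≠ 0 := Nat.cast_ne_zero.mpr hn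
    have : (m : ℚ) = n * q := by
      field_simp at hq
      linarith [hq]
    exact_mod_cast this
  · rintro ⟨q, rfl⟩
    refine ⟨q, ?_⟩
    have hn' : (n : ℚ) ≠ 0 := Nat.cast_ne_zero.mpr hn
    push_cast
    field_simp
    simp

end Aux2
section Aux3
set_option linter.unusedSectionVars false

variable {Θ : Type} [Group Θ] [Fintype Θ] {X : Type} [AddCommGroup X] [DistribMulAction Θ X]

/-- The pairing: a function `f : Θ → X^∨` gives `ker N → ℚ/ℤ`, `x ↦ F_f(x)/n`. -/
noncomputable def pairF (f : Θ → (X →+ ℤ)) : (normMap Θ X).ker →+ AddCircle (1 : ℚ) :=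
  (qmap (Fintype.card Θ)).comp ((Ff Θ X f).comp (AddSubgroup.subtype _))

lemma pairF_apply (f : Θ → (X →+ ℤ)) (x : (normMap Θ X).ker) :
    pairF f x = qmap (Fintype.card Θ) (Ff Θ X f x.val) := rfl

/-- `F_f` is divisible by `n` on the augmentation subgroup. -/
lemma dvd_Ff_of_aug {f : Θ → (X →+ ℤ)} (hf : f ∈ oneCocycles Θ (X →+ ℤ)) {z : X}
    (hz : z ∈ augmentationSubgroup Θ X) : (Fintype.card Θ : ℤ) ∣ Ff Θ X f z := by
  induction hz using AddSubgroup.closure_induction with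
  | mem z hz =>
      obtain ⟨θ, y, rfl⟩ := hz
      have h := cocycle_key hf θ (θ • y)
      rw [inv_smul_smul] at h
      rw [map_sub]
      exact ⟨f θ (θ • y), by linarith [h]⟩
  | zero => simp
  | add a b ha hb hia hib => rw [map_add]; exact dvd_add hia hib
  | neg a ha hia => rw [map_neg]; exact hia.neg_right

/-- `F_f` is divisible by `n` on `ker N` when `f` is a coboundary. -/
lemma Ff_coboundary (c : X →+ ℤ) (x : X) (hx : x ∈ (normMap Θ X).ker) :
    Ff Θ X (coboundaryHom Θ (X →+ ℤ) c) x = -((Fintype.card Θ : ℤ) * c x) := by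
  have hx' : ∑ θ : Θ, θ⁻¹ • x = 0 := by
    rw [sum_inv_smul]
    exact hx
  rw [Ff_apply]
  have : ∀ θ : Θ, (coboundaryHom Θ (X →+ ℤ) c θ) x = c (θ⁻¹ • x) - c x := fun θ => rfl
  simp only [this]
  rw [Finset.sum_sub_distrib, ← map_sum, hx', map_zero]
  simp [mul_comm]

end Aux3
section Aux4
set_option linter.unusedSectionVars false

variable {Θ : Type} [Group Θ] [Fintype Θ] {X : Type} [AddCommGroup X] [DistribMulAction Θ X]

/-- The pairing descends to Tate cohomology. -/
noncomputable def PhiOne (f : oneCocycles Θ (X →+ ℤ)) :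
    TateHminusOne Θ X →+ AddCircle (1 : ℚ) :=
  QuotientAddGroup.lift _ (pairF f.val) (by
    intro x hx
    rw [AddMonoidHom.mem_ker, pairF_apply, qmap_eq_zero_iff _ Fintype.card_ne_zero]
    exact dvd_Ff_of_aug f.2 hx)

lemma PhiOne_apply (f : oneCocycles Θ (X →+ ℤ)) (x : (normMap Θ X).ker) :
    PhiOne f (QuotientAddGroup.mk x) = qmap (Fintype.card Θ) (Ff Θ X f.val x.val) := rfl

/-- The pairing as a homomorphism on cocycles. -/
noncomputable def PhiTwo : oneCocycles Θ (X →+ ℤ) →+ (TateHminusOne Θ X →+ AddCircle (1 : ℚ)) :=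
  AddMonoidHom.mk' PhiOne (by
    intro f g
    ext x
    refine QuotientAddGroup.induction_on x (fun y => ?_)
    show PhiOne (f + g) (QuotientAddGroup.mk y) = PhiOne f _ + PhiOne g _
    simp only [PhiOne_apply]
    rw [← map_add]
    congr 1
    have : Ff Θ X ((f + g) : oneCocycles Θ (X →+ ℤ)).val = Ff Θ X f.val + Ff Θ X g.val := by
      simp [Ff, Finset.sum_add_distrib]
    rw [this]
    rfl)

/-- The pairing descends to H¹. -/
noncomputable def Phi : H1 Θ (X →+ ℤ) →+ (TateHminusOne Θ X →+ AddCircle (1 : ℚ)) :=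
  QuotientAddGroup.lift _ PhiTwo (by
    intro f hf
    obtain ⟨c, hc⟩ := hf
    ext x
    refine QuotientAddGroup.induction_on x (fun y => ?_)
    show PhiOne f (QuotientAddGroup.mk y) = 0
    rw [PhiOne_apply]
    have : f.val = coboundaryHom Θ (X →+ ℤ) c := hc.symm
    rw [this, Ff_coboundary c y.val y.2, qmap_eq_zero_iff _ Fintype.card_ne_zero]
    exact (Dvd.intro _ rfl).neg_right)

lemma Phi_apply (f : oneCocycles Θ (X →+ ℤ)) (x : (normMap Θ X).ker) :
    Phi (QuotientAddGroup.mk f) (QuotientAddGroup.mk x) =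
      qmap (Fintype.card Θ) (Ff Θ X f.val x.val) := rfl

end Aux4
section Aux5
set_option linter.unusedSectionVars false
set_option maxHeartbeats 1000000

variable {Θ : Type} [Group Θ] [Fintype Θ] {X : Type} [AddCommGroup X] [DistribMulAction Θ X]

lemma Phi_injective [Module.Free ℤ X] [Module.Finite ℤ X] :
    Function.Injective (Phi : H1 Θ (X →+ ℤ) →+ (TateHminusOne Θ X →+ AddCircle (1 : ℚ))) := by
  rw [injective_iff_map_eq_zero]
  intro q
  refine QuotientAddGroup.induction_on q (fun f => ?_)
  intro hq
  set n := Fintype.card Θ with hn_def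
  have hn : (n : ℤ) ≠ 0 := by exact_mod_cast (Fintype.card_ne_zero : n ≠ 0)
  haveI : NeZero n := ⟨Fintype.card_ne_zero⟩
  set F := Ff Θ X f.val with hF_def
  -- F is divisible by n on ker N
  have hdvdker : ∀ x : (normMap Θ X).ker, (n : ℤ) ∣ F x.val := by
    intro x
    have h1 : Phi (QuotientAddGroup.mk f) (QuotientAddGroup.mk x) = 0 := by rw [hq]; rfl
    rw [Phi_apply] at h1
    exact (qmap_eq_zero_iff n Fintype.card_ne_zero _).mp h1
  -- set up the linear algebra
  let Nl : X →ₗ[ℤ] X := (normMap Θ X).toIntLinearMap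
  let b := Module.Free.chooseBasis ℤ X
  obtain ⟨m, bR⟩ := Submodule.basisOfPid b (LinearMap.range Nl)
  let Q : X →ₗ[ℤ] ZMod n := ((Int.castAddHom (ZMod n)).comp F).toIntLinearMap
  have hQker : LinearMap.ker Nl ≤ LinearMap.ker Q := by
    intro x hx
    have hx' : x ∈ (normMap Θ X).ker := hx
    have : (n : ℤ) ∣ F x := hdvdker ⟨x, hx'⟩
    show ((F x : ℤ) : ZMod n) = 0
    rwa [ZMod.intCast_zmod_eq_zero_iff_dvd]
  let Q2 : LinearMap.range Nl →ₗ[ℤ] ZMod n :=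
    (Submodule.liftQ _ Q hQker).comp Nl.quotKerEquivRange.symm.toLinearMap
  have hQ2 : ∀ x : X, Q2 ⟨Nl x, LinearMap.mem_range_self Nl x⟩ = Q x := by
    intro x
    show (Submodule.liftQ _ Q hQker) (Nl.quotKerEquivRange.symm ⟨Nl x, _⟩) = Q x
    rw [LinearMap.quotKerEquivRange_symm_apply_image]
    rfl
  -- choose preimages of the basis of the range
  have hpre : ∀ i : Fin m, ∃ y : X, Nl y = (bR i).val := fun i => (bR i).2
  choose pre hpre using hpre
  let ψ : LinearMap.range Nl →ₗ[ℤ] ℤ := Module.Basis.constr bR ℤ (fun i => F (pre i))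
  have hψQ2 : ((Int.castAddHom (ZMod n)).toIntLinearMap.comp ψ) = Q2 := by
    refine Module.Basis.ext bR (fun i => ?_)
    show ((ψ (bR i) : ℤ) : ZMod n) = Q2 (bR i)
    have h1 : ψ (bR i) = F (pre i) := Module.Basis.constr_basis bR ℤ _ i
    have h2 : (bR i) = ⟨Nl (pre i), LinearMap.mem_range_self Nl (pre i)⟩ :=
      Subtype.ext (hpre i).symm
    rw [h1, h2, hQ2]
    rfl
  have hdvd : ∀ x : X, (n : ℤ) ∣ (F x - ψ ⟨Nl x, LinearMap.mem_range_self Nl x⟩) := by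
    intro x
    rw [← ZMod.intCast_zmod_eq_zero_iff_dvd]
    push_cast
    have h1 : ((ψ ⟨Nl x, LinearMap.mem_range_self Nl x⟩ : ℤ) : ZMod n) = Q x := by
      rw [← hQ2 x]
      exact LinearMap.congr_fun hψQ2 _
    rw [h1]
    show ((F x : ℤ) : ZMod n) - Q x = 0
    simp [Q]
  -- the invariant part G and the corrector c
  let G : X → ℤ := fun x => ψ ⟨Nl x, LinearMap.mem_range_self Nl x⟩
  have hGadd : ∀ x y : X, G (x + y) = G x + G y := by
    intro x y
    show ψ _ = ψ _ + ψ _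
    rw [← map_add]
    congr 1
    exact Subtype.ext (map_add Nl x y)
  have hGinv : ∀ (a : Θ) (x : X), G (a⁻¹ • x) = G x := by
    intro a x
    show ψ _ = ψ _
    congr 1
    exact Subtype.ext (norm_smul_eq Θ X a⁻¹ x)
  have hdvd' : ∀ x : X, (n : ℤ) ∣ (F x - G x) := hdvd
  let c : X →+ ℤ := AddMonoidHom.mk' (fun x => (F x - G x) / (n : ℤ)) (by
    intro x y
    refine mul_left_cancel₀ hn ?_
    rw [mul_add, Int.mul_ediv_cancel' (hdvd' (x + y)), Int.mul_ediv_cancel' (hdvd' x),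
      Int.mul_ediv_cancel' (hdvd' y), map_add, hGadd]
    ring)
  have hc : ∀ x : X, (n : ℤ) * c x = F x - G x := fun x => Int.mul_ediv_cancel' (hdvd' x)
  -- conclude that f is a coboundary
  show QuotientAddGroup.mk f = 0
  rw [QuotientAddGroup.eq_zero_iff, AddSubgroup.mem_addSubgroupOf]
  refine ⟨-c, ?_⟩
  funext a
  ext x
  refine mul_left_cancel₀ hn ?_
  have hkey := cocycle_key f.2 a x
  have h1 : (coboundaryHom Θ (X →+ ℤ) (-c)) a x = c x - c (a⁻¹ • x) := by
    show (a • (-c) - (-c)) x = c x - c (a⁻¹ • x)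
    simp only [AddMonoidHom.sub_apply, contrag_smul_apply, AddMonoidHom.neg_apply]
    ring
  rw [h1]
  have h2 : (n : ℤ) * (c x - c (a⁻¹ • x)) = (F x - G x) - (F (a⁻¹ • x) - G (a⁻¹ • x)) := by
    rw [mul_sub, hc, hc]
  rw [h2, hGinv a x]
  linarith [hkey]

end Aux5
section Aux6
set_option linter.unusedSectionVars false
set_option maxHeartbeats 1000000

variable {Θ : Type} [Group Θ] [Fintype Θ] {X : Type} [AddCommGroup X] [DistribMulAction Θ X]

lemma Phi_surjective [Module.Free ℤ X] [Module.Finite ℤ X] :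
    Function.Surjective (Phi : H1 Θ (X →+ ℤ) →+ (TateHminusOne Θ X →+ AddCircle (1 : ℚ))) := by
  intro h
  set n := Fintype.card Θ with hn_def
  have hn : (n : ℚ) ≠ 0 := by exact_mod_cast (Fintype.card_ne_zero : n ≠ 0)
  -- Step 1: extend h to a character Ψ of X that kills the augmentation subgroup
  let j0 : (normMap Θ X).ker →+ X ⧸ (augmentationSubgroup Θ X) :=
    (QuotientAddGroup.mk' _).comp (AddSubgroup.subtype _)
  have hj0 : ∀ x, j0 x = QuotientAddGroup.mk x.val := fun x => rfl
  let ι : TateHminusOne Θ X →+ X ⧸ (augmentationSubgroup Θ X) :=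
    QuotientAddGroup.lift _ j0 (by
      intro x hx
      rw [AddMonoidHom.mem_ker, hj0, QuotientAddGroup.eq_zero_iff]
      exact hx)
  have hι : Function.Injective ι := by
    rw [injective_iff_map_eq_zero]
    intro q
    refine QuotientAddGroup.induction_on q (fun x => ?_)
    intro hq
    have hmem : x.val ∈ augmentationSubgroup Θ X := (QuotientAddGroup.eq_zero_iff _).mp hq
    exact (QuotientAddGroup.eq_zero_iff _).mpr (AddSubgroup.mem_addSubgroupOf.mpr hmem)
  obtain ⟨Ψ', hΨ'⟩ := CharacterModule.dual_surjective_of_injective (R := ℤ)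
    ι.toIntLinearMap hι h
  let Ψ : X →+ AddCircle (1 : ℚ) :=
    (Ψ' : X ⧸ (augmentationSubgroup Θ X) →+ AddCircle (1 : ℚ)).comp
      (QuotientAddGroup.mk' (augmentationSubgroup Θ X))
  have hΨaug : ∀ s ∈ augmentationSubgroup Θ X, Ψ s = 0 := by
    intro s hs
    show Ψ' (QuotientAddGroup.mk' _ s) = 0
    have : (QuotientAddGroup.mk' (augmentationSubgroup Θ X)) s = 0 := by
      rw [QuotientAddGroup.mk'_apply, QuotientAddGroup.eq_zero_iff]
      exact hs
    rw [this, map_zero]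
  have hΨker : ∀ x : (normMap Θ X).ker, Ψ x.val = h (QuotientAddGroup.mk x) := by
    intro x
    have h1 : (CharacterModule.dual ι.toIntLinearMap Ψ') (QuotientAddGroup.mk x)
        = h (QuotientAddGroup.mk x) := by rw [hΨ']; rfl
    exact h1.symm ▸ rfl
  -- Step 2: lift Ψ to a ℚ-valued linear map
  let b := Module.Free.chooseBasis ℤ X
  have hq : ∀ i, ∃ q : ℚ, (q : AddCircle (1 : ℚ)) = Ψ (b i) := fun i =>
    Quotient.exists_rep (Ψ (b i))
  choose qv hqv using hq
  let gt : X →ₗ[ℤ] ℚ := Module.Basis.constr b ℤ qv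
  have hgt : ∀ x : X, ((gt x : ℚ) : AddCircle (1 : ℚ)) = Ψ x := by
    have : ((QuotientAddGroup.mk' (AddSubgroup.zmultiples (1:ℚ))).toIntLinearMap.comp gt)
        = Ψ.toIntLinearMap := by
      refine Module.Basis.ext b (fun i => ?_)
      show ((gt (b i) : ℚ) : AddCircle (1 : ℚ)) = Ψ (b i)
      rw [show gt (b i) = qv i from Module.Basis.constr_basis b ℤ qv i, hqv]
    exact fun x => LinearMap.congr_fun this x
  -- Step 3: the associated integral cocycle
  have hint : ∀ (a : Θ) (x : X), (((gt x - gt (a⁻¹ • x)).num : ℚ)) = gt x - gt (a⁻¹ • x) := by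
    intro a x
    have hmem : x - a⁻¹ • x ∈ augmentationSubgroup Θ X := by
      have : a⁻¹ • x - x ∈ augmentationSubgroup Θ X :=
        AddSubgroup.subset_closure ⟨a⁻¹, x, rfl⟩
      have h2 := neg_mem this
      rwa [neg_sub] at h2
    have h0 : ((gt x - gt (a⁻¹ • x) : ℚ) : AddCircle (1 : ℚ)) = 0 := by
      rw [show (gt x - gt (a⁻¹ • x) : ℚ) = gt (x - a⁻¹ • x) from (map_sub gt _ _).symm, hgt]
      exact hΨaug _ hmem
    rw [AddCircle.coe_eq_zero_iff] at h0
    obtain ⟨z, hz⟩ := h0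
    simp only [zsmul_eq_mul, mul_one] at hz
    rw [← hz]
    simp
  let f : Θ → (X →+ ℤ) := fun a => AddMonoidHom.mk' (fun x => (gt x - gt (a⁻¹ • x)).num) (by
    intro x y
    apply (Int.cast_injective (α := ℚ))
    push_cast [hint]
    rw [smul_add, map_add, map_add]
    ring)
  have hfval : ∀ (a : Θ) (x : X), ((f a x : ℤ) : ℚ) = gt x - gt (a⁻¹ • x) := fun a x => hint a x
  have hfcoc : f ∈ oneCocycles Θ (X →+ ℤ) := by
    intro a c
    ext x
    apply (Int.cast_injective (α := ℚ))
    have h1 : ((f (a * c)) x : ℚ) = gt x - gt ((a * c)⁻¹ • x) := hfval _ _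
    have h2 : (((f a + a • f c) x : ℤ) : ℚ) = (gt x - gt (a⁻¹ • x)) +
        (gt (a⁻¹ • x) - gt (c⁻¹ • a⁻¹ • x)) := by
      show (((f a x) + (f c (a⁻¹ • x)) : ℤ) : ℚ) = _
      push_cast [hfval]
      ring
    rw [h1, h2, mul_inv_rev, mul_smul]
    ring
  -- Step 4: Phi of this cocycle is h
  refine ⟨QuotientAddGroup.mk (⟨f, hfcoc⟩ : oneCocycles Θ (X →+ ℤ)), ?_⟩
  ext t
  refine QuotientAddGroup.induction_on t (fun x => ?_)
  rw [Phi_apply, ← hΨker x, ← hgt x.val, qmap_apply]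
  have hsum : ((Ff Θ X f x.val : ℤ) : ℚ) = n * gt x.val := by
    rw [Ff_apply]
    push_cast [hfval]
    rw [Finset.sum_sub_distrib]
    have hker : ∑ θ : Θ, θ⁻¹ • x.val = 0 := by rw [sum_inv_smul]; exact x.2
    have hz : ∑ θ : Θ, gt (θ⁻¹ • x.val) = 0 := by
      rw [← map_sum, hker, map_zero]
    rw [hz, sub_zero, Finset.sum_const, Finset.card_univ, nsmul_eq_mul, ← hn_def]
  rw [hsum]
  congr 1
  field_simp
  rw [hn_def]; ring
end Aux6
theorem h1_dual_iso_pontryagin_dual_of_tate (Θ : Type) [Group Θ] [Fintype Θ]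
    (X : Type) [AddCommGroup X] [DistribMulAction Θ X]
    (hfree : Module.Free ℤ X) (hfg : Module.Finite ℤ X) :
    Nonempty (H1 Θ (X →+ ℤ) ≃+ (TateHminusOne Θ X →+ AddCircle (1 : ℚ))) := by
  haveI := hfree
  haveI := hfg
  exact ⟨AddEquiv.ofBijective Phi ⟨Phi_injective, Phi_surjective⟩⟩
end

section
/- Let Δ be a finite group, F a flasque Δ-lattice and P a permutation Δ-module. Then Ext^1_{ℤ[Δ]}(F, P) = 0; equivalently, every short exact sequence of Δ-modules 0 → P → E → F → 0 splits. -/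
/-!
STATEMENT 5: for a finite group Δ, a flasque Δ-lattice F and a permutation
Δ-module P, every short exact sequence of Δ-modules 0 → P → E → F → 0 splits
(i.e. Ext¹_{ℤ[Δ]}(F, P) = 0).
-/

open scoped BigOperators

/-- Ĥ^{-1}(Θ, X) = 0, expressed elementwise. -/
def TateHminusOneVanishes {Δ : Type*} [Group Δ] (Θ : Subgroup Δ) [Fintype Θ]
    (X : Type*) [AddCommGroup X] [DistribMulAction Δ X] : Prop :=
  ∀ x : X, (∑ θ : Θ, (θ : Δ) • x) = 0 →
    x ∈ AddSubgroup.closure {z : X | ∃ (θ : Θ) (y : X), z = (θ : Δ) • y - y}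

/-- A Δ-module is flasque if Ĥ^{-1}(Θ, X) = 0 for every subgroup Θ ≤ Δ. -/
def IsFlasque (Δ : Type*) [Group Δ] (X : Type*) [AddCommGroup X]
    [DistribMulAction Δ X] : Prop :=
  ∀ (Θ : Subgroup Δ) (_ : Fintype Θ), TateHminusOneVanishes Θ X

/-- A permutation Δ-module: a finitely generated module with a Δ-stable ℤ-basis. -/
def IsPermutationModule (Δ : Type*) [Group Δ] (X : Type*) [AddCommGroup X]
    [DistribMulAction Δ X] : Prop :=
  ∃ (ι : Type) (_ : Finite ι) (b : Module.Basis ι ℤ X), ∀ (δ : Δ) (i : ι), ∃ j : ι, δ • b i = b j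

/-- A Δ-equivariant additive homomorphism. -/
def IsEquivariant (Δ : Type*) [Group Δ] {X Y : Type*} [AddCommGroup X] [AddCommGroup Y]
    [DistribMulAction Δ X] [DistribMulAction Δ Y] (φ : X →+ Y) : Prop :=
  ∀ (δ : Δ) (x : X), φ (δ • x) = δ • φ x

section LemmaA

variable {Δ : Type} [Group Δ] {F : Type} [AddCommGroup F] [DistribMulAction Δ F]

lemma smul_zsmul_commA (δ : Δ) (n : ℤ) (v : F) : δ • (n • v) = n • (δ • v) :=
  (DistribMulAction.toAddMonoidHom F δ).map_zsmul n v

lemma lemmaA (hfree : Module.Free ℤ F) (hfin : Module.Finite ℤ F)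
    (Θ : Subgroup Δ) [Fintype Θ]
    (hfl : TateHminusOneVanishes Θ F)
    (c : Θ → (F →+ ℤ))
    (hc : ∀ (θ τ : Θ) (y : F), c (θ * τ) y = c τ ((θ : Δ)⁻¹ • y) + c θ y) :
    ∃ f : F →+ ℤ, ∀ (θ : Θ) (y : F), f ((θ : Δ) • y) - f y = c θ ((θ : Δ) • y) := by
  classical
  haveI := hfree; haveI := hfin
  -- c 1 = 0
  have hc1 : ∀ y, c 1 y = 0 := by
    intro y
    have h := hc 1 1 y
    have h2 : ((((1:Θ) : Δ))⁻¹ • y) = y := by simp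
    rw [mul_one, h2] at h
    omega
  -- the twisted translation maps on A := Θ → F
  let T : Θ → (Θ → F) →ₗ[ℤ] (Θ → F) := fun θ =>
    { toFun := fun x ρ => (θ : Δ) • x (θ⁻¹ * ρ)
      map_add' := by intro x y; funext ρ; simp [smul_add]
      map_smul' := by intro n x; funext ρ; simp [smul_zsmul_commA] }
  have hT_apply : ∀ (θ : Θ) (x : Θ → F) (ρ : Θ), T θ x ρ = (θ : Δ) • x (θ⁻¹ * ρ) :=
    fun θ x ρ => rfl
  have hT_mul : ∀ (θ τ : Θ) (x : Θ → F), T θ (T τ x) = T (θ * τ) x := by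
    intro θ τ x; funext ρ
    rw [hT_apply, hT_apply, hT_apply, smul_smul]
    have h1 : τ⁻¹ * (θ⁻¹ * ρ) = (θ * τ)⁻¹ * ρ := by group
    have h2 : (θ : Δ) * (τ : Δ) = ((θ * τ : Θ) : Δ) := rfl
    rw [h1, h2]
  have hT_one : ∀ x, T 1 x = x := by
    intro x; funext ρ; rw [hT_apply]; simp
  -- reindexing of sums
  have hre : ∀ (θ : Θ) (G : Θ → F), (∑ ρ : Θ, G (θ * ρ)) = ∑ ρ : Θ, G ρ := by
    intro θ G
    exact Fintype.sum_equiv (Equiv.mulLeft θ) _ _ (fun ρ => rfl)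
  -- the submodule M of sum-zero tuples
  let M : Submodule ℤ (Θ → F) :=
    { carrier := {x | (∑ ρ : Θ, x ρ) = 0}
      add_mem' := by intro a b ha hb; simp only [Set.mem_setOf_eq] at *
                     simp [Finset.sum_add_distrib, ha, hb]
      zero_mem' := by simp
      smul_mem' := by intro n x hx; simp only [Set.mem_setOf_eq] at *
                      simp [← Finset.smul_sum, hx] }
  have hM_mem : ∀ x : Θ → F, x ∈ M ↔ (∑ ρ : Θ, x ρ) = 0 := fun x => Iff.rfl
  have hTM : ∀ (θ : Θ) (x : Θ → F), x ∈ M → T θ x ∈ M := by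
    intro θ x hx
    rw [hM_mem] at *
    have : (∑ ρ : Θ, (θ : Δ) • x (θ⁻¹ * ρ)) = (θ : Δ) • ∑ ρ : Θ, x (θ⁻¹ * ρ) := by
      rw [Finset.smul_sum]
    rw [show (∑ ρ : Θ, T θ x ρ) = ∑ ρ : Θ, (θ : Δ) • x (θ⁻¹ * ρ) from rfl, this,
      hre θ⁻¹ x, hx, smul_zero]
  -- the norm map
  let NM : (Θ → F) →ₗ[ℤ] (Θ → F) := ∑ θ : Θ, T θ
  have hNM_apply : ∀ x, NM x = ∑ θ : Θ, T θ x := by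
    intro x
    simp [NM, LinearMap.sum_apply]
  have hNM_M : ∀ x ∈ M, NM x ∈ M := by
    intro x hx
    rw [hNM_apply]
    exact Submodule.sum_mem M (fun θ _ => hTM θ x hx)
  have hNinv : ∀ (τ : Θ) (x : Θ → F), T τ (NM x) = NM x := by
    intro τ x
    calc T τ (NM x) = ∑ θ : Θ, T τ (T θ x) := by rw [hNM_apply, map_sum]
      _ = ∑ θ : Θ, T (τ * θ) x := Finset.sum_congr rfl (fun θ _ => hT_mul τ θ x)
      _ = ∑ θ : Θ, T θ x := Fintype.sum_equiv (Equiv.mulLeft τ) _ _ (fun ρ => rfl)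
      _ = NM x := (hNM_apply x).symm
  -- the functional φ
  let φ : (Θ → F) →+ ℤ := AddMonoidHom.mk' (fun x => ∑ ρ : Θ, c ρ (x ρ))
    (by intro a b; simp [Finset.sum_add_distrib])
  have hφ_apply : ∀ x, φ x = ∑ ρ : Θ, c ρ (x ρ) := fun x => rfl
  have hφT : ∀ (θ : Θ), ∀ x ∈ M, φ (T θ x) = φ x := by
    intro θ x hx
    rw [hφ_apply, hφ_apply]
    have step1 : (∑ ρ : Θ, c ρ (T θ x ρ)) = ∑ ρ : Θ, c (θ * ρ) ((θ : Δ) • x ρ) := by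
      refine (Fintype.sum_equiv (Equiv.mulLeft θ) _ _ (fun ρ => ?_)).symm
      simp [hT_apply, inv_mul_cancel_left]
    rw [step1]
    have step2 : ∀ ρ : Θ, c (θ * ρ) ((θ : Δ) • x ρ)
        = c ρ (x ρ) + c θ ((θ : Δ) • x ρ) := by
      intro ρ
      rw [hc θ ρ ((θ : Δ) • x ρ), inv_smul_smul]
    rw [Finset.sum_congr rfl (fun ρ _ => step2 ρ), Finset.sum_add_distrib]
    have step3 : (∑ ρ : Θ, c θ ((θ : Δ) • x ρ)) = 0 := by
      have e1 : (∑ ρ : Θ, c θ ((θ : Δ) • x ρ)) = c θ (∑ ρ : Θ, (θ : Δ) • x ρ) :=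
        (map_sum (c θ) _ Finset.univ).symm
      rw [e1, ← Finset.smul_sum, (hM_mem x).mp hx, smul_zero, map_zero]
    rw [step3, add_zero]
  have hφN : ∀ x ∈ M, φ (NM x) = (Fintype.card Θ : ℤ) * φ x := by
    intro x hx
    rw [hNM_apply, map_sum, Finset.sum_congr rfl (fun θ _ => hφT θ x hx),
      Finset.sum_const, Finset.card_univ, nsmul_eq_mul]
  have hkill : ∀ x ∈ M, NM x = 0 → φ x = 0 := by
    intro x hx h0
    have := hφN x hx
    rw [h0, map_zero] at this
    have hcard : (Fintype.card Θ : ℤ) ≠ 0 := by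
      exact_mod_cast Fintype.card_ne_zero
    exact (mul_eq_zero.mp this.symm).resolve_left hcard
  -- norm of a single
  have hNM_single : ∀ (a : Θ) (u : F),
      NM (Pi.single a u) = fun ρ : Θ => ((ρ * a⁻¹ : Θ) : Δ) • u := by
    intro a u
    funext ρ
    rw [hNM_apply, Finset.sum_apply]
    have : ∀ θ : Θ, T θ (Pi.single a u) ρ = if θ = ρ * a⁻¹ then (θ : Δ) • u else 0 := by
      intro θ
      rw [hT_apply, Pi.single_apply]
      by_cases h : θ⁻¹ * ρ = a
      · rw [if_pos h, if_pos]
        rw [← h]; group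
      · rw [if_neg h, smul_zero, if_neg]
        intro hh; apply h; rw [hh]; group
    rw [Finset.sum_congr rfl (fun θ _ => this θ), Finset.sum_ite_eq' Finset.univ,
      if_pos (Finset.mem_univ _)]
  have hsingle_M : ∀ (a : Θ) (u : F), (∑ ρ : Θ, Pi.single a u ρ) = u := by
    intro a u
    rw [Finset.sum_pi_single' a u Finset.univ, if_pos (Finset.mem_univ _)]
  -- the invariant sum-zero submodule
  let V : Submodule ℤ (Θ → F) :=
    { carrier := {x | x ∈ M ∧ ∀ θ : Θ, T θ x = x}
      add_mem' := by
        rintro a b ⟨ha, ha2⟩ ⟨hb, hb2⟩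
        exact ⟨M.add_mem ha hb, fun θ => by rw [map_add, ha2 θ, hb2 θ]⟩
      zero_mem' := ⟨M.zero_mem, fun θ => map_zero _⟩
      smul_mem' := by
        rintro n x ⟨hx, hx2⟩
        exact ⟨M.smul_mem n hx, fun θ => by rw [map_smul, hx2 θ]⟩ }
  have hV_mem : ∀ x : Θ → F, x ∈ V ↔ (x ∈ M ∧ ∀ θ : Θ, T θ x = x) := fun x => Iff.rfl
  -- surjectivity of the norm onto V (uses flasqueness)
  have hsurjinv : ∀ x ∈ V, ∃ w ∈ M, NM w = x := by
    intro x hx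
    obtain ⟨hx1, hx2⟩ := (hV_mem x).mp hx
    have hxρ : ∀ ρ : Θ, x ρ = (ρ : Δ) • x 1 := by
      intro ρ
      have := congrFun (hx2 ρ) ρ
      rw [hT_apply, inv_mul_cancel] at this
      exact this.symm
    have hv : (∑ ρ : Θ, (ρ : Δ) • x 1) = 0 := by
      calc (∑ ρ : Θ, (ρ : Δ) • x 1) = ∑ ρ : Θ, x ρ :=
            Finset.sum_congr rfl (fun ρ _ => (hxρ ρ).symm)
        _ = 0 := (hM_mem x).mp hx1
    have hcl := hfl (x 1) hv
    have key : ∀ v : F, v ∈ AddSubgroup.closure {z : F | ∃ (θ : Θ) (y : F), z = (θ : Δ) • y - y} →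
        ∃ w ∈ M, NM w = fun ρ : Θ => (ρ : Δ) • v := by
      intro v hv
      induction hv using AddSubgroup.closure_induction with
      | mem z hz =>
          obtain ⟨θ₀, y, rfl⟩ := hz
          set u : F := (θ₀ : Δ) • y with hu
          refine ⟨(Pi.single (1 : Θ) u : Θ → F) - (Pi.single θ₀ u : Θ → F), ?_, ?_⟩
          · rw [hM_mem]
            have : (∑ ρ : Θ, ((Pi.single (1 : Θ) u : Θ → F)
                - (Pi.single θ₀ u : Θ → F)) ρ)
                = (∑ ρ : Θ, (Pi.single (1 : Θ) u : Θ → F) ρ)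
                  - ∑ ρ : Θ, (Pi.single θ₀ u : Θ → F) ρ := by
              rw [← Finset.sum_sub_distrib]; rfl
            rw [this, hsingle_M, hsingle_M, sub_self]
          · rw [map_sub, hNM_single, hNM_single]
            funext ρ
            have h1 : ((ρ * (1:Θ)⁻¹ : Θ) : Δ) • u = (ρ : Δ) • ((θ₀ : Δ) • y) := by
              rw [hu]; norm_num
            have h2 : ((ρ * θ₀⁻¹ : Θ) : Δ) • u = (ρ : Δ) • y := by
              rw [hu, smul_smul]
              push_cast
              rw [mul_assoc, inv_mul_cancel, mul_one]
            show ((ρ * (1:Θ)⁻¹ : Θ) : Δ) • u - ((ρ * θ₀⁻¹ : Θ) : Δ) • u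
                = (ρ : Δ) • ((θ₀ : Δ) • y - y)
            rw [h1, h2, smul_sub]
      | zero =>
          refine ⟨0, M.zero_mem, ?_⟩
          rw [map_zero]
          funext ρ; rw [smul_zero]; rfl
      | add a b _ _ iha ihb =>
          obtain ⟨w₁, hw₁, hw₁'⟩ := iha
          obtain ⟨w₂, hw₂, hw₂'⟩ := ihb
          refine ⟨w₁ + w₂, M.add_mem hw₁ hw₂, ?_⟩
          rw [map_add, hw₁', hw₂']
          funext ρ; show (ρ:Δ) • a + (ρ:Δ) • b = (ρ:Δ) • (a + b); rw [smul_add]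
      | neg a _ iha =>
          obtain ⟨w₁, hw₁, hw₁'⟩ := iha
          refine ⟨-w₁, M.neg_mem hw₁, ?_⟩
          rw [map_neg, hw₁']
          funext ρ; show -((ρ:Δ) • a) = (ρ:Δ) • (-a); rw [smul_neg]
    obtain ⟨w, hw, hw'⟩ := key (x 1) hcl
    refine ⟨w, hw, ?_⟩
    rw [hw']
    funext ρ
    exact (hxρ ρ).symm
  -- split off V: quotient is f.g. torsion-free, hence free, hence projective
  haveI hQfin : Module.Finite ℤ ((Θ → F) ⧸ V) := inferInstance
  haveI hQtf : NoZeroSMulDivisors ℤ ((Θ → F) ⧸ V) := by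
    refine ⟨fun {n} {q} h => ?_⟩
    by_cases hn : n = 0
    · exact Or.inl hn
    right
    obtain ⟨x, rfl⟩ := Submodule.mkQ_surjective V q
    rw [← map_smul, Submodule.mkQ_apply, Submodule.Quotient.mk_eq_zero] at h
    rw [Submodule.mkQ_apply, Submodule.Quotient.mk_eq_zero]
    obtain ⟨hm, hinv⟩ := (hV_mem _).mp h
    refine (hV_mem x).mpr ⟨?_, fun θ => ?_⟩
    · rw [hM_mem] at hm ⊢
      have : (∑ ρ : Θ, (n • x) ρ) = n • ∑ ρ : Θ, x ρ := by
        rw [Finset.smul_sum]; rfl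
      rw [this] at hm
      exact (smul_eq_zero.mp hm).resolve_left hn
    · have := hinv θ
      rw [map_smul] at this
      have hinj : Function.Injective (fun z : Θ → F => n • z) :=
        smul_right_injective (Θ → F) hn
      exact hinj this
  haveI hQfree : Module.Free ℤ ((Θ → F) ⧸ V) := Module.free_of_finite_type_torsion_free'
  obtain ⟨sec, hsec⟩ := Module.projective_lifting_property V.mkQ
    (LinearMap.id : ((Θ → F) ⧸ V) →ₗ[ℤ] ((Θ → F) ⧸ V)) (Submodule.mkQ_surjective V)
  have hsec' : ∀ q, V.mkQ (sec q) = q := fun q => congrFun (congrArg (⇑) hsec) q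
  -- retraction onto V
  let rA : (Θ → F) →ₗ[ℤ] (Θ → F) := LinearMap.id - sec.comp V.mkQ
  have hrA_apply : ∀ x, rA x = x - sec (V.mkQ x) := fun x => rfl
  have hrA_mem : ∀ x, rA x ∈ V := by
    intro x
    have : V.mkQ (rA x) = 0 := by
      rw [hrA_apply, map_sub, hsec']
      exact sub_self _
    rwa [Submodule.mkQ_apply, Submodule.Quotient.mk_eq_zero] at this
  have hrA_id : ∀ x ∈ V, rA x = x := by
    intro x hx
    rw [hrA_apply]
    have : V.mkQ x = 0 := by rwa [Submodule.mkQ_apply, Submodule.Quotient.mk_eq_zero]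
    rw [this, map_zero, sub_zero]
  -- choose norm-preimages on V
  have hWex : ∀ x : Θ → F, ∃ w, (x ∈ V → w ∈ M ∧ NM w = x) := by
    intro x
    by_cases hx : x ∈ V
    · obtain ⟨w, hw, hw'⟩ := hsurjinv x hx
      exact ⟨w, fun _ => ⟨hw, hw'⟩⟩
    · exact ⟨0, fun h => absurd h hx⟩
  choose W hW using hWex
  -- ψ
  let ψ : (Θ → F) → ℤ := fun x => φ (W (rA x))
  have hφW_eq : ∀ w ∈ M, ∀ x ∈ V, NM w = x → φ (W x) = φ w := by
    intro w hw x hxV hNw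
    obtain ⟨hWM, hWN⟩ := hW x hxV
    have hd : W x - w ∈ M := M.sub_mem hWM hw
    have hd0 : NM (W x - w) = 0 := by rw [map_sub, hWN, hNw, sub_self]
    have := hkill _ hd hd0
    rw [map_sub] at this
    omega
  have hψN : ∀ w ∈ M, ψ (NM w) = φ w := by
    intro w hw
    have hxV : NM w ∈ V := (hV_mem _).mpr ⟨hNM_M w hw, fun θ => hNinv θ w⟩
    show φ (W (rA (NM w))) = φ w
    rw [hrA_id _ hxV]
    exact hφW_eq w hw (NM w) hxV rfl
  have hψadd : ∀ x y, ψ (x + y) = ψ x + ψ y := by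
    intro x y
    show φ (W (rA (x + y))) = φ (W (rA x)) + φ (W (rA y))
    rw [map_add]
    have hx := hrA_mem x
    have hy := hrA_mem y
    obtain ⟨hWMx, hWNx⟩ := hW _ hx
    obtain ⟨hWMy, hWNy⟩ := hW _ hy
    have hsum : rA x + rA y ∈ V := V.add_mem hx hy
    have : φ (W (rA x + rA y)) = φ (W (rA x) + W (rA y)) := by
      apply hφW_eq _ (M.add_mem hWMx hWMy) _ hsum
      rw [map_add, hWNx, hWNy]
    rw [this, map_add]
  have hψzero : ψ 0 = 0 := by
    have := hψadd 0 0
    rw [add_zero] at this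
    omega
  have hψneg : ∀ x, ψ (-x) = -ψ x := by
    intro x
    have := hψadd x (-x)
    rw [add_neg_cancel, hψzero] at this
    omega
  have hψsub : ∀ x y, ψ (x - y) = ψ x - ψ y := by
    intro x y
    rw [sub_eq_add_neg, hψadd, hψneg]
    ring
  -- the element m' y
  let m'A : F →+ (Θ → F) :=
    { toFun := fun y ρ => (ρ : Δ) • y
      map_zero' := by funext ρ; exact smul_zero _
      map_add' := by intro a b; funext ρ; exact smul_add _ _ _ }
  let m'B : F →+ (Θ → F) :=
    { toFun := fun y => Pi.single (1 : Θ) (∑ ρ : Θ, (ρ : Δ) • y)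
      map_zero' := by simp
      map_add' := by
        intro a b
        have h1 : (∑ σ : Θ, (σ : Δ) • (a + b))
            = (∑ σ : Θ, (σ : Δ) • a) + ∑ σ : Θ, (σ : Δ) • b := by
          rw [← Finset.sum_add_distrib]
          exact Finset.sum_congr rfl (fun σ _ => smul_add _ _ _)
        simp only [h1, Pi.single_add] }
  let m' : F → (Θ → F) := fun y => m'A y - m'B y
  have hm'_def : ∀ y, m' y = m'A y - m'B y := fun y => rfl
  have hm'M : ∀ y, m' y ∈ M := by
    intro y
    rw [hM_mem]
    have : (∑ ρ : Θ, m' y ρ) = (∑ ρ : Θ, m'A y ρ) - ∑ ρ : Θ, m'B y ρ := by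
      rw [← Finset.sum_sub_distrib]; rfl
    rw [this]
    have hA : (∑ ρ : Θ, m'A y ρ) = ∑ ρ : Θ, (ρ : Δ) • y := rfl
    have hB : (∑ ρ : Θ, m'B y ρ) = ∑ ρ : Θ, (ρ : Δ) • y := hsingle_M _ _
    rw [hA, hB, sub_self]
  have hm'add : ∀ y z, m' (y + z) = m' y + m' z := by
    intro y z
    rw [hm'_def, hm'_def, hm'_def, map_add, map_add]
    abel
  -- the final f
  let f : F →+ ℤ := AddMonoidHom.mk' (fun y => - ψ (m' y))
    (by intro a b
        show - ψ (m' (a + b)) = - ψ (m' a) + - ψ (m' b)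
        rw [hm'add, hψadd]; ring)
  have hf_apply : ∀ y, f y = - ψ (m' y) := fun y => rfl
  -- master identity
  have master : ∀ (θ : Θ) (v : F), c θ v = f v - f ((θ : Δ)⁻¹ • v) := by
    intro θ v
    set x : Θ → F := (Pi.single θ v : Θ → F) - (Pi.single (1 : Θ) v : Θ → F) with hxdef
    have hxM : x ∈ M := by
      rw [hM_mem]
      have : (∑ ρ : Θ, x ρ)
          = (∑ ρ : Θ, (Pi.single θ v : Θ → F) ρ) - ∑ ρ : Θ, (Pi.single (1:Θ) v : Θ → F) ρ := by
        rw [← Finset.sum_sub_distrib]; rfl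
      rw [this, hsingle_M, hsingle_M, sub_self]
    have hφsingle : ∀ (a : Θ) (u : F), φ (Pi.single a u) = c a u := by
      intro a u
      rw [hφ_apply]
      rw [Finset.sum_eq_single a]
      · rw [Pi.single_eq_same]
      · intro ρ _ hρ
        rw [Pi.single_eq_of_ne hρ, map_zero]
      · intro h; exact absurd (Finset.mem_univ a) h
    have hφx : φ x = c θ v := by
      rw [hxdef, map_sub, hφsingle, hφsingle, hc1, sub_zero]
    have hsum_eq : (∑ ρ : Θ, (ρ : Δ) • ((θ : Δ)⁻¹ • v)) = ∑ ρ : Θ, (ρ : Δ) • v := by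
      refine Fintype.sum_equiv (Equiv.mulRight θ⁻¹) _ _ (fun ρ => ?_)
      have : ((Equiv.mulRight θ⁻¹) ρ : Δ) • v = ((ρ * θ⁻¹ : Θ) : Δ) • v := rfl
      rw [this, smul_smul]
      push_cast
      rfl
    have hm'B_apply : ∀ y, m'B y = (Pi.single (1:Θ) (∑ ρ : Θ, (ρ : Δ) • y) : Θ → F) :=
      fun y => rfl
    have hmB_eq : m'B ((θ : Δ)⁻¹ • v) = m'B v := by
      rw [hm'B_apply, hm'B_apply, hsum_eq]
    have hNx : NM x = m' ((θ : Δ)⁻¹ • v) - m' v := by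
      rw [hxdef, map_sub, hNM_single, hNM_single, hm'_def, hm'_def, hmB_eq]
      funext ρ
      have e1 : ((ρ * θ⁻¹ : Θ) : Δ) • v = (ρ : Δ) • ((θ : Δ)⁻¹ • v) := by
        rw [smul_smul]; push_cast; rfl
      have e2 : ((ρ * (1:Θ)⁻¹ : Θ) : Δ) • v = (ρ : Δ) • v := by norm_num
      show ((ρ * θ⁻¹ : Θ) : Δ) • v - ((ρ * (1:Θ)⁻¹ : Θ) : Δ) • v
          = (m'A ((θ : Δ)⁻¹ • v) - m'B v - (m'A v - m'B v)) ρ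
      rw [e1, e2]
      have e3 : (m'A ((θ : Δ)⁻¹ • v) - m'B v - (m'A v - m'B v)) ρ
          = m'A ((θ : Δ)⁻¹ • v) ρ - m'B v ρ - (m'A v ρ - m'B v ρ) := rfl
      rw [e3]
      have e4 : m'A ((θ : Δ)⁻¹ • v) ρ = (ρ : Δ) • ((θ : Δ)⁻¹ • v) := rfl
      have e5 : m'A v ρ = (ρ : Δ) • v := rfl
      rw [e4, e5]
      abel
    have hkey : ψ (NM x) = φ x := hψN x hxM
    rw [hNx, hψsub, hφx] at hkey
    rw [hf_apply, hf_apply]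
    omega
  refine ⟨f, fun θ y => ?_⟩
  have := master θ ((θ : Δ) • y)
  rw [inv_smul_smul] at this
  omega

end LemmaA

theorem ext_flasque_permutation_vanishes (Δ : Type) [Group Δ] [Finite Δ]
    (F P E : Type) [AddCommGroup F] [AddCommGroup P] [AddCommGroup E]
    [DistribMulAction Δ F] [DistribMulAction Δ P] [DistribMulAction Δ E]
    (hFfree : Module.Free ℤ F) (hFfg : Module.Finite ℤ F) (hF : IsFlasque Δ F)
    (hP : IsPermutationModule Δ P)
    (ι : P →+ E) (hι : IsEquivariant Δ ι) (hinj : Function.Injective ι)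
    (p : E →+ F) (hp : IsEquivariant Δ p) (hsurj : Function.Surjective p)
    (hexact : Function.Exact ι p) :
    ∃ s : F →+ E, IsEquivariant Δ s ∧ p.comp s = AddMonoidHom.id F := by
  classical
  haveI := hFfree; haveI := hFfg
  obtain ⟨κ, hκ, b, hbperm⟩ := hP
  haveI : Fintype κ := Fintype.ofFinite κ
  choose π hπ using hbperm
  have hbinj : Function.Injective b := b.injective
  have hπ1 : ∀ i, π 1 i = i := fun i => hbinj (by rw [← hπ, one_smul])
  have hπmul : ∀ δ ε i, π (δ * ε) i = π δ (π ε i) := fun δ ε i =>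
    hbinj (by rw [← hπ, ← hπ, ← hπ, mul_smul])
  have hπinv : ∀ δ i, π δ⁻¹ (π δ i) = i := fun δ i => by
    rw [← hπmul, inv_mul_cancel, hπ1]
  have hπinv' : ∀ δ i, π δ (π δ⁻¹ i) = i := fun δ i => by
    rw [← hπmul, mul_inv_cancel, hπ1]
  have hπbij : ∀ δ, Function.Bijective (π δ) := fun δ =>
    Function.bijective_iff_has_inverse.2 ⟨π δ⁻¹, fun i => hπinv δ i, fun i => hπinv' δ i⟩
  -- ℤ-linear section of p
  let bF := Module.Free.chooseBasis ℤ F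
  choose lft hlft using hsurj
  let σL : F →ₗ[ℤ] E := (Module.Basis.constr bF ℤ) (fun i => lft (bF i))
  have hpσ : ∀ y, p (σL y) = y := by
    have h : (p.toIntLinearMap.comp σL) = LinearMap.id := by
      apply Module.Basis.ext bF
      intro i
      simp only [LinearMap.comp_apply, LinearMap.id_apply]
      rw [show σL (bF i) = lft (bF i) from Module.Basis.constr_basis bF ℤ _ i]
      exact hlft (bF i)
    intro y
    exact congrFun (congrArg (⇑) h) y
  -- the retraction candidate data ρf with ι (ρf e) = e - σL (p e)
  have hρex : ∀ e : E, ∃ q : P, ι q = e - σL (p e) := by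
    intro e
    have hpe : p (e - σL (p e)) = 0 := by
      rw [map_sub, hpσ, sub_self]
    rcases (hexact _).mp hpe with ⟨q, hq⟩
    exact ⟨q, hq⟩
  choose ρf hρf using hρex
  have hpι : ∀ q : P, p (ι q) = 0 := fun q => (hexact (ι q)).mpr ⟨q, rfl⟩
  have hρfι : ∀ q : P, ρf (ι q) = q := by
    intro q
    apply hinj
    rw [hρf, hpι, map_zero, sub_zero]
  have hρadd : ∀ e₁ e₂, ρf (e₁ + e₂) = ρf e₁ + ρf e₂ := by
    intro e₁ e₂
    apply hinj
    rw [map_add, hρf, hρf, hρf, map_add, map_add]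
    abel
  -- core: for each base point i₀, an invariant functional
  have hcore : ∀ i₀ : κ, ∃ lam : E →+ ℤ,
      (∀ δ : Δ, δ • b i₀ = b i₀ → ∀ e, lam (δ • e) = lam e) ∧
      (∀ k : κ, lam (ι (b k)) = if k = i₀ then 1 else 0) := by
    intro i₀
    set Θ : Subgroup Δ := MulAction.stabilizer Δ (b i₀) with hΘ
    haveI : Fintype Θ := Fintype.ofFinite _
    have hmemΘ : ∀ δ : Δ, δ ∈ Θ ↔ δ • b i₀ = b i₀ := fun δ => Iff.rfl
    have hπΘ : ∀ θ : Θ, π (θ : Δ) i₀ = i₀ := by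
      intro θ
      apply hbinj
      rw [← hπ]
      exact θ.2
    -- the coordinate functional
    let estar : P →+ ℤ := (b.coord i₀).toAddMonoidHom
    have hestar_b : ∀ k, estar (b k) = if k = i₀ then 1 else 0 := by
      intro k
      show b.coord i₀ (b k) = _
      rw [Module.Basis.coord_apply, Module.Basis.repr_self, Finsupp.single_apply]
    have hestar_inv : ∀ (θ : Θ) (q : P), estar ((θ : Δ) • q) = estar q := by
      intro θ q
      let Lsm : P →ₗ[ℤ] P :=
        { toFun := fun z => (θ : Δ) • z
          map_add' := fun a b => smul_add _ a b
          map_smul' := fun n z => smul_zsmul_commA _ n z }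
      let L : P →ₗ[ℤ] ℤ := (b.coord i₀).comp Lsm
      have : L = b.coord i₀ := by
        apply Module.Basis.ext b
        intro k
        show b.coord i₀ ((θ : Δ) • b k) = b.coord i₀ (b k)
        rw [hπ, Module.Basis.coord_apply, Module.Basis.repr_self, Finsupp.single_apply,
          Module.Basis.coord_apply, Module.Basis.repr_self, Finsupp.single_apply]
        congr 1
        have : π (θ : Δ) k = i₀ ↔ k = i₀ := by
          constructor
          · intro h
            have := hπinv (θ : Δ) k
            rw [h] at this
            rw [← this]
            conv_lhs => rw [← hπΘ θ]
            rw [hπinv]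
          · intro h; rw [h]; exact hπΘ θ
        simp only [eq_iff_iff]
        exact this
      exact congrFun (congrArg (⇑) this) q
    -- the cocycle values
    let Cf : Θ → F → P := fun θ y => ρf ((θ : Δ) • σL ((θ : Δ)⁻¹ • y))
    have hCι : ∀ (θ : Θ) (y : F),
        ι (Cf θ y) = (θ : Δ) • σL ((θ : Δ)⁻¹ • y) - σL y := by
      intro θ y
      rw [show Cf θ y = ρf ((θ : Δ) • σL ((θ : Δ)⁻¹ • y)) from rfl, hρf]
      congr 2
      rw [hp, hpσ, smul_inv_smul]
    have hCadd : ∀ (θ : Θ) (y z : F), Cf θ (y + z) = Cf θ y + Cf θ z := by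
      intro θ y z
      apply hinj
      rw [map_add, hCι, hCι, hCι, smul_add, map_add, map_add, smul_add]
      abel
    let c : Θ → (F →+ ℤ) := fun θ => AddMonoidHom.mk' (fun y => estar (Cf θ y))
      (by intro a b'
          show estar (Cf θ (a + b')) = estar (Cf θ a) + estar (Cf θ b')
          rw [hCadd, map_add])
    have hc_apply : ∀ (θ : Θ) (y : F), c θ y = estar (Cf θ y) := fun θ y => rfl
    -- cocycle identity
    have hCco : ∀ (θ τ : Θ) (y : F),
        Cf (θ * τ) y = (θ : Δ) • Cf τ ((θ : Δ)⁻¹ • y) + Cf θ y := by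
      intro θ τ y
      apply hinj
      rw [map_add, hCι, hCι, hι, hCι]
      have hco : ((θ * τ : Θ) : Δ) = (θ : Δ) * (τ : Δ) := rfl
      rw [hco, mul_inv_rev, smul_sub, smul_smul, mul_smul ((θ:Δ)) ((τ:Δ)),
        mul_smul ((τ:Δ)⁻¹) ((θ:Δ)⁻¹) y, ← mul_smul (θ:Δ) (τ:Δ)]
      abel
    have hc : ∀ (θ τ : Θ) (y : F), c (θ * τ) y = c τ ((θ : Δ)⁻¹ • y) + c θ y := by
      intro θ τ y
      rw [hc_apply, hc_apply, hc_apply, hCco, map_add, hestar_inv]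
    -- apply lemma A
    obtain ⟨f, hf⟩ := lemmaA hFfree hFfg Θ (hF Θ inferInstance) c hc
    -- the invariant functional
    let lam : E →+ ℤ := AddMonoidHom.mk' (fun e => estar (ρf e) - f (p e))
      (by intro a b'
          show estar (ρf (a + b')) - f (p (a + b'))
            = (estar (ρf a) - f (p a)) + (estar (ρf b') - f (p b'))
          rw [hρadd, map_add, map_add, map_add]
          ring)
    have hlam_apply : ∀ e, lam e = estar (ρf e) - f (p e) := fun e => rfl
    refine ⟨lam, ?_, ?_⟩
    · intro δ hδ e
      set θ : Θ := ⟨δ, hδ⟩ with hθ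
      have hδθ : δ = (θ : Δ) := rfl
      have hρθ : ρf ((θ : Δ) • e) = (θ : Δ) • ρf e + Cf θ ((θ : Δ) • p e) := by
        apply hinj
        rw [map_add, hρf, hι, hρf, hCι, inv_smul_smul, hp, smul_sub]
        abel
      rw [hlam_apply, hlam_apply, hδθ, hρθ, map_add, hestar_inv, hp]
      have := hf θ (p e)
      rw [hc_apply] at this
      omega
    · intro k
      rw [hlam_apply, hρfι, hpι, map_zero, sub_zero, hestar_b]
  choose lam0 hlam0a hlam0b using hcore
  -- orbit representatives
  let st : Setoid κ :=
    ⟨fun i j => ∃ δ : Δ, π δ i = j,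
      ⟨fun i => ⟨1, hπ1 i⟩,
       fun {i j} h => by
         obtain ⟨δ, hδ⟩ := h
         exact ⟨δ⁻¹, by rw [← hδ, hπinv]⟩,
       fun {i j k} h h' => by
         obtain ⟨δ, hδ⟩ := h
         obtain ⟨ε, hε⟩ := h'
         exact ⟨ε * δ, by rw [hπmul, hδ, hε]⟩⟩⟩
  let rep : κ → κ := fun i => (Quotient.mk st i).out
  have hrep_rel : ∀ i, ∃ δ : Δ, π δ (rep i) = i := by
    intro i
    have : st.r (rep i) i := Quotient.exact (Quotient.out_eq (Quotient.mk st i) ▸ rfl)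
    exact this
  have hrep_π : ∀ (δ : Δ) (i : κ), rep (π δ i) = rep i := by
    intro δ i
    show (Quotient.mk st (π δ i)).out = (Quotient.mk st i).out
    congr 1
    exact Quotient.sound (⟨δ⁻¹, hπinv δ i⟩ : st.r (π δ i) i)
  choose g hg using hrep_rel
  have h1' : ∀ j : κ, π (g j)⁻¹ j = rep j := by
    intro j
    have h2 := congrArg (π (g j)⁻¹) (hg j)
    rw [hπinv] at h2
    exact h2.symm
  -- the family of functionals
  let lamI : κ → E →+ ℤ := fun i =>
    (lam0 (rep i)).comp (DistribMulAction.toAddMonoidHom E (g i)⁻¹)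
  have hlamI_apply : ∀ i e, lamI i e = lam0 (rep i) ((g i)⁻¹ • e) := fun i e => rfl
  have key1 : ∀ (δ : Δ) (i : κ) (e : E), lamI (π δ i) (δ • e) = lamI i e := by
    intro δ i e
    rw [hlamI_apply, hlamI_apply, hrep_π]
    set θ : Δ := (g (π δ i))⁻¹ * δ * (g i) with hθdef
    have hπθ : π θ (rep i) = rep i := by
      rw [hθdef, hπmul, hπmul, hg i, h1' (π δ i), hrep_π]
    have hθstab : θ • b (rep i) = b (rep i) := by
      rw [hπ, hπθ]
    have harg : (g (π δ i))⁻¹ • (δ • e) = θ • ((g i)⁻¹ • e) := by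
      rw [smul_smul, smul_smul, hθdef]
      congr 1
      group
    rw [harg]
    exact hlam0a (rep i) θ hθstab _
  have key2 : ∀ (i k : κ), lamI i (ι (b k)) = if k = i then 1 else 0 := by
    intro i k
    rw [hlamI_apply, ← hι, hπ]
    rw [hlam0b (rep i) (π (g i)⁻¹ k)]
    congr 1
    simp only [eq_iff_iff]
    constructor
    · intro h
      have := congrArg (π (g i)) h
      rw [hπinv', hg] at this
      exact this
    · intro h
      rw [h]
      exact h1' i
  -- the equivariant retraction r : E →+ P
  let r : E →+ P := AddMonoidHom.mk' (fun e => ∑ i : κ, lamI i e • b i)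
    (by intro a b'
        show (∑ i : κ, lamI i (a + b') • b i)
          = (∑ i : κ, lamI i a • b i) + ∑ i : κ, lamI i b' • b i
        rw [← Finset.sum_add_distrib]
        refine Finset.sum_congr rfl (fun i _ => ?_)
        rw [map_add, add_smul])
  have hr_apply : ∀ e, r e = ∑ i : κ, lamI i e • b i := fun e => rfl
  have hrι : ∀ q : P, r (ι q) = q := by
    have h : (r.toIntLinearMap.comp ι.toIntLinearMap) = LinearMap.id := by
      apply Module.Basis.ext b
      intro k
      show r (ι (b k)) = b k
      rw [hr_apply]
      have : ∀ i : κ, lamI i (ι (b k)) • b i = if k = i then b i else 0 := by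
        intro i
        rw [key2]
        by_cases h : k = i <;> simp [h]
      rw [Finset.sum_congr rfl (fun i _ => this i)]
      rw [Finset.sum_ite_eq Finset.univ k b, if_pos (Finset.mem_univ k)]
    intro q
    exact congrFun (congrArg (⇑) h) q
  have hreq : ∀ (δ : Δ) (e : E), r (δ • e) = δ • r e := by
    intro δ e
    rw [hr_apply, hr_apply]
    have h1 : δ • (∑ i : κ, lamI i e • b i) = ∑ i : κ, lamI i e • (δ • b i) := by
      rw [Finset.smul_sum]
      exact Finset.sum_congr rfl (fun i _ => smul_zsmul_commA δ _ _)
    rw [h1]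
    refine (Fintype.sum_bijective (π δ) (hπbij δ) _ _ (fun i => ?_)).symm
    rw [key1, hπ]
  -- the equivariant section s
  let s : F →+ E := AddMonoidHom.mk' (fun y => σL y - ι (r (σL y)))
    (by intro a b'
        show σL (a + b') - ι (r (σL (a + b')))
          = (σL a - ι (r (σL a))) + (σL b' - ι (r (σL b')))
        rw [map_add, map_add, map_add]
        abel)
  have hs_apply : ∀ y, s y = σL y - ι (r (σL y)) := fun y => rfl
  refine ⟨s, ?_, ?_⟩
  · intro δ y
    rw [hs_apply, hs_apply]
    have hq : ∃ q : P, ι q = σL (δ • y) - δ • σL y := by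
      apply (hexact _).mp
      rw [map_sub, hpσ, hp, hpσ, sub_self]
    obtain ⟨q, hqeq⟩ := hq
    have hee : σL (δ • y) = δ • σL y + ι q := by rw [hqeq]; abel
    have h3 : r (δ • σL y + ι q) = δ • r (σL y) + q := by
      rw [map_add, hreq, hrι]
    rw [hee, h3, map_add, hι, smul_sub]
    abel
  · apply AddMonoidHom.ext
    intro y
    show p (s y) = y
    rw [hs_apply, map_sub, hpσ, hpι, sub_zero]
end

section
/- Let f : A → B and f' : A' → B' be homomorphisms of abelian groups. Suppose there is an isomorphism φ : A ⊕ B' → A' ⊕ B such that (f' ⊕ id_B) ∘ φ = σ ∘ (f ⊕ id_{B'}), where σ : B ⊕ B' → B' ⊕ B is the swap isomorphism. Then coker f ≅ coker f'. -/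
/-!
STATEMENT 9: if f : A → B and f' : A' → B' are homomorphisms of abelian groups and
φ : A ⊕ B' ≃ A' ⊕ B is an isomorphism with (f' ⊕ id_B) ∘ φ = σ ∘ (f ⊕ id_{B'})
(σ the swap B ⊕ B' ≃ B' ⊕ B), then coker f ≅ coker f'.
-/

/-- Auxiliary: `coker f ≃ coker (f ⊕ id)`. -/
noncomputable def cokerProdIdEquiv {A B C : Type} [AddCommGroup A] [AddCommGroup B]
    [AddCommGroup C] (f : A →+ B) :
    (B ⧸ f.range) ≃+ ((B × C) ⧸ (f.prodMap (AddMonoidHom.id C)).range) := by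
  set R := (f.prodMap (AddMonoidHom.id C)).range
  refine AddMonoidHom.toAddEquiv
    (QuotientAddGroup.lift f.range ((QuotientAddGroup.mk' R).comp (AddMonoidHom.inl B C)) ?_)
    (QuotientAddGroup.lift R ((QuotientAddGroup.mk' f.range).comp (AddMonoidHom.fst B C)) ?_)
    ?_ ?_
  · rintro x ⟨a, rfl⟩
    simpa [R] using (QuotientAddGroup.eq_zero_iff (G := B × C) (N := R) (f a, (0:C))).mpr ⟨(a, 0), rfl⟩
  · rintro ⟨b, c⟩ ⟨⟨a, c'⟩, h⟩
    have : (QuotientAddGroup.mk' f.range) b = 0 :=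
      (QuotientAddGroup.eq_zero_iff b).mpr ⟨a, congrArg Prod.fst h⟩
    exact this
  · ext b
    simp
  · ext p
    obtain ⟨b, c⟩ := p
    simp only [AddMonoidHom.coe_comp, Function.comp_apply, AddMonoidHom.id_comp,
      QuotientAddGroup.lift_mk', AddMonoidHom.coe_fst, QuotientAddGroup.mk'_apply,
      AddMonoidHom.inl_apply]
    rw [QuotientAddGroup.eq]
    exact ⟨(0, c), by simp⟩

theorem coker_iso_of_stable_iso {A B A' B' : Type} [AddCommGroup A] [AddCommGroup B]
    [AddCommGroup A'] [AddCommGroup B'] (f : A →+ B) (f' : A' →+ B')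
    (φ : A × B' ≃+ A' × B)
    (hφ : ∀ p : A × B',
      (f'.prodMap (AddMonoidHom.id B)) (φ p) =
        (AddEquiv.prodComm : B × B' ≃+ B' × B) ((f.prodMap (AddMonoidHom.id B')) p)) :
    Nonempty ((B ⧸ f.range) ≃+ (B' ⧸ f'.range)) := by
  have hmap : (f.prodMap (AddMonoidHom.id B')).range.map
      (AddEquiv.prodComm : B × B' ≃+ B' × B) = (f'.prodMap (AddMonoidHom.id B)).range := by
    ext x
    constructor
    · rintro ⟨y, ⟨p, rfl⟩, rfl⟩
      exact ⟨φ p, by simpa using hφ p⟩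
    · rintro ⟨q, rfl⟩
      exact ⟨(f.prodMap (AddMonoidHom.id B')) (φ.symm q), ⟨φ.symm q, rfl⟩,
        by have := hφ (φ.symm q); rw [φ.apply_symm_apply] at this; simpa using this.symm⟩
  exact ⟨(cokerProdIdEquiv f).trans <|
    (QuotientAddGroup.congr _ _ (AddEquiv.prodComm : B × B' ≃+ B' × B) hmap).trans
      (cokerProdIdEquiv f').symm⟩
end

section
/- Let 1 → F → E →^π H → 1 be a central extension of groups. Assume that the commutator subgroup [E,E] intersects F trivially and that π([E,E]) = [H,H]. Then the natural homomorphism E → (E/[E,E]) ×_{H/[H,H]} H, e ↦ (e·[E,E], π(e)), is an isomorphism of groups, where the fiber product is taken over the maps E/[E,E] → H/[H,H] (induced by π) and H → H/[H,H] (the quotient map). -/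
/-!
STATEMENT 11: for a central extension 1 → F → E →^π H → 1 with [E,E] ∩ F = 1 and
π([E,E]) = [H,H], the natural map E → (E/[E,E]) ×_{H/[H,H]} H,
e ↦ (e·[E,E], π(e)), is an isomorphism of groups. Here E/[E,E] = Abelianization E
and the fiber product is the equalizer subgroup of Abelianization E × H.
-/

/-- The fiber product (E/[E,E]) ×_{H/[H,H]} H as a subgroup of Abelianization E × H. -/
def abelianizationFiberProduct {E H : Type} [Group E] [Group H] (π : E →* H) :
    Subgroup (Abelianization E × H) :=
  ((Abelianization.map π).comp (MonoidHom.fst (Abelianization E) H)).eqLocus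
    ((Abelianization.of).comp (MonoidHom.snd (Abelianization E) H))

theorem central_extension_fiber_product_iso {E H : Type} [Group E] [Group H] (π : E →* H)
    (hsurj : Function.Surjective π) (hcent : π.ker ≤ Subgroup.center E)
    (htriv : commutator E ⊓ π.ker = ⊥)
    (himage : (commutator E).map π = commutator H) :
    ∃ ψ : E ≃* abelianizationFiberProduct π,
      ∀ e : E, ((ψ e : Abelianization E × H)) = (Abelianization.of e, π e) := by
  have hmem : ∀ e : E, (Abelianization.of e, π e) ∈ abelianizationFiberProduct π := by
    intro e
    show (Abelianization.map π) (Abelianization.of e) = Abelianization.of (π e)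
    simp [Abelianization.map_of]
  let φ : E →* abelianizationFiberProduct π :=
    ((Abelianization.of.prod π).codRestrict _ hmem)
  have hφ : ∀ e : E, ((φ e : Abelianization E × H)) = (Abelianization.of e, π e) :=
    fun e => rfl
  have hinj : Function.Injective φ := by
    rw [← MonoidHom.ker_eq_bot_iff]
    rw [eq_bot_iff]
    intro e he
    rw [MonoidHom.mem_ker] at he
    have h1 : ((φ e : Abelianization E × H)) = (1, 1) := by rw [he]; rfl
    rw [hφ e, Prod.mk.injEq] at h1
    have hc : e ∈ commutator E := (QuotientGroup.eq_one_iff e).mp h1.1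
    have : e ∈ commutator E ⊓ π.ker := ⟨hc, h1.2⟩
    rw [htriv] at this
    exact this
  have hsur : Function.Surjective φ := by
    rintro ⟨⟨a, h⟩, hab⟩
    have hab' : (Abelianization.map π) a = Abelianization.of h := hab
    obtain ⟨e, rfl⟩ : ∃ e : E, Abelianization.of e = a := by
      obtain ⟨e, he⟩ := Quotient.exists_rep a
      exact ⟨e, he⟩
    rw [Abelianization.map_of] at hab'
    -- h⁻¹ * π e ∈ commutator H
    have hmemc : h⁻¹ * π e ∈ commutator H := by
      have := (QuotientGroup.eq (s := commutator H) (a := h) (b := π e)).mp hab'.symm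
      exact this
    rw [← himage] at hmemc
    obtain ⟨c, hc, hπc⟩ := hmemc
    refine ⟨e * c⁻¹, ?_⟩
    apply Subtype.ext
    rw [hφ]
    have h1 : Abelianization.of (e * c⁻¹) = Abelianization.of e := by
      have hc1 : Abelianization.of c = 1 := (QuotientGroup.eq_one_iff c).mpr hc
      rw [map_mul, map_inv, hc1]
      simp
    have h2 : π (e * c⁻¹) = h := by
      rw [map_mul, map_inv, hπc]
      group
    rw [h1, h2]
  exact ⟨MulEquiv.ofBijective φ ⟨hinj, hsur⟩, hφ⟩
end
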